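/- Fix n ≥ 1, an even integer ζ with 0 ≤ ζ ≤ n, and nonnegative integers ℓ₁, ℓ₂, ℓ₃ with ℓ₁ + ℓ₂ + ℓ₃ ≤ n. Let S_ζ = {1, 3, …, 2ζ-1}. Then the number of ordered triples (A₁, A₂, A₃) of mutually disjoint subsets of {1,…,2n} with |Aᵢ| = 2ℓᵢ such that both symmetric differences (A₂ ∪ A₃) △ S_ζ and (A₃ ∪ A₁) △ S_ζ are unions of pairs {2j-1, 2j}, equals 2^ζ · Σ_{j=0}^{ζ/2} C(ζ, 2j) · C(n-ζ; ℓ₁ - ζ/2 + j, ℓ₂ - ζ/2 + j, ℓ₃ - j, n - ℓ₁ - ℓ₂ - ℓ₃ - j), where the multinomial coefficient is zero if any argument is negative. -/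

import Mathlib

/-- The paired subset `∪_{j∈T}{2j-1, 2j}` of `{1,…,2n}` (0-based: `∪_{j∈T}{2j, 2j+1}`). -/
def pairsOf (n : ℕ) (T : Finset (Fin n)) : Finset (Fin (2 * n)) :=
  T.biUnion fun j =>
    {⟨2 * (j : ℕ), by have := j.isLt; omega⟩, ⟨2 * (j : ℕ) + 1, by have := j.isLt; omega⟩}

/-- A subset of `{1,…,2n}` is paired if it is a union of pairs `{2j-1, 2j}`. -/
def IsPaired (n : ℕ) (A : Finset (Fin (2 * n))) : Prop :=
  ∃ T : Finset (Fin n), A = pairsOf n T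

open Finset

lemma mem_pairsOf {n : ℕ} {T : Finset (Fin n)} {x : Fin (2 * n)} :
    x ∈ pairsOf n T ↔ (⟨(x : ℕ) / 2, by have := x.isLt; omega⟩ : Fin n) ∈ T := by
  have hx := x.isLt
  simp only [pairsOf, Finset.mem_biUnion, Finset.mem_insert, Finset.mem_singleton]
  constructor
  · rintro ⟨j, hj, h | h⟩ <;>
    · have hv : (x : ℕ) = 2 * (j : ℕ) ∨ (x : ℕ) = 2 * (j : ℕ) + 1 := by
        rw [h]; first | (left; rfl) | (right; rfl)
      have hj2 : (⟨(x : ℕ) / 2, by omega⟩ : Fin n) = j := by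
        apply Fin.ext; show (x : ℕ) / 2 = (j : ℕ); omega
      rwa [hj2]
  · intro h
    refine ⟨_, h, ?_⟩
    rcases Nat.mod_two_eq_zero_or_one (x : ℕ) with he | ho
    · left; apply Fin.ext; show (x : ℕ) = 2 * ((x : ℕ) / 2); omega
    · right; apply Fin.ext; show (x : ℕ) = 2 * ((x : ℕ) / 2) + 1; omega

lemma isPaired_iff {n : ℕ} (B : Finset (Fin (2 * n))) :
    IsPaired n B ↔ ∀ j : Fin n,
      ((⟨2 * (j : ℕ), by have := j.isLt; omega⟩ : Fin (2 * n)) ∈ B ↔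
       (⟨2 * (j : ℕ) + 1, by have := j.isLt; omega⟩ : Fin (2 * n)) ∈ B) := by
  constructor
  · rintro ⟨T, rfl⟩ j
    rw [mem_pairsOf, mem_pairsOf]
    have h1 : (⟨((⟨2 * (j : ℕ), by have := j.isLt; omega⟩ : Fin (2 * n)) : ℕ) / 2,
        by have := j.isLt; omega⟩ : Fin n) = j := by
      apply Fin.ext; show 2 * (j : ℕ) / 2 = (j : ℕ); omega
    have h2 : (⟨((⟨2 * (j : ℕ) + 1, by have := j.isLt; omega⟩ : Fin (2 * n)) : ℕ) / 2,
        by have := j.isLt; omega⟩ : Fin n) = j := by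
      apply Fin.ext; show (2 * (j : ℕ) + 1) / 2 = (j : ℕ); omega
    rw [h1, h2]
  · intro h
    refine ⟨Finset.univ.filter fun j =>
      (⟨2 * (j : ℕ), by have := j.isLt; omega⟩ : Fin (2 * n)) ∈ B, ?_⟩
    ext x
    have hx := x.isLt
    rw [mem_pairsOf, Finset.mem_filter]
    simp only [Finset.mem_univ, true_and]
    have hkey := h ⟨(x : ℕ) / 2, by omega⟩
    rcases Nat.mod_two_eq_zero_or_one (x : ℕ) with he | ho
    · have hxe : (⟨2 * ((⟨(x : ℕ) / 2, by omega⟩ : Fin n) : ℕ), by omega⟩ : Fin (2 * n)) = x := by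
        apply Fin.ext; show 2 * ((x : ℕ) / 2) = (x : ℕ); omega
      rw [hxe]
    · have hxo : (⟨2 * ((⟨(x : ℕ) / 2, by omega⟩ : Fin n) : ℕ) + 1, by omega⟩ : Fin (2 * n)) = x := by
        apply Fin.ext; show 2 * ((x : ℕ) / 2) + 1 = (x : ℕ); omega
      rw [hxo] at hkey
      rw [← hkey]


/-- `S_ζ = {1, 3, …, 2ζ-1}` (1-based odd indices; 0-based: even indices `< 2ζ`). -/
def oddSet (n ζ : ℕ) : Finset (Fin (2 * n)) :=
  Finset.univ.filter fun i => (i : ℕ) % 2 = 0 ∧ (i : ℕ) < 2 * ζ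

open Finset

def comp4 : Fin 4 → Fin 4 := ![3, 2, 1, 0]

def col (n ζ : ℕ) (f : Fin n → Fin 4) (x : Fin (2 * n)) : Fin 4 :=
  if (x : ℕ) % 2 = 1 ∧ (x : ℕ) / 2 < ζ then
    comp4 (f ⟨(x : ℕ) / 2, by have := x.isLt; omega⟩)
  else f ⟨(x : ℕ) / 2, by have := x.isLt; omega⟩

def e0 {n : ℕ} (j : Fin n) : Fin (2 * n) := ⟨2 * (j : ℕ), by have := j.isLt; omega⟩
def e1 {n : ℕ} (j : Fin n) : Fin (2 * n) := ⟨2 * (j : ℕ) + 1, by have := j.isLt; omega⟩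

lemma col_e0 (n ζ : ℕ) (f : Fin n → Fin 4) (j : Fin n) : col n ζ f (e0 j) = f j := by
  have h2 : (⟨((e0 j : Fin (2*n)) : ℕ) / 2, by have := (e0 j).isLt; omega⟩ : Fin n) = j := by
    apply Fin.ext; show 2 * (j : ℕ) / 2 = (j : ℕ); omega
  rw [col, if_neg (by
    intro ⟨h, _⟩
    have : (2 * (j : ℕ)) % 2 = 1 := h
    omega)]
  rw [h2]

lemma col_e1 (n ζ : ℕ) (f : Fin n → Fin 4) (j : Fin n) :
    col n ζ f (e1 j) = if (j : ℕ) < ζ then comp4 (f j) else f j := by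
  have h2 : (⟨((e1 j : Fin (2*n)) : ℕ) / 2, by have := (e1 j).isLt; omega⟩ : Fin n) = j := by
    apply Fin.ext; show (2 * (j : ℕ) + 1) / 2 = (j : ℕ); omega
  have hd : ((e1 j : Fin (2*n)) : ℕ) / 2 = (j : ℕ) := by
    show (2 * (j : ℕ) + 1) / 2 = (j : ℕ); omega
  have hm : ((e1 j : Fin (2*n)) : ℕ) % 2 = 1 := by
    show (2 * (j : ℕ) + 1) % 2 = 1; omega
  by_cases hj : (j : ℕ) < ζ
  · rw [col, if_pos ⟨hm, by rw [hd]; exact hj⟩, h2, if_pos hj]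
  · rw [col, if_neg (by intro ⟨_, h⟩; rw [hd] at h; exact hj h), h2, if_neg hj]

lemma e0_mem_oddSet {n ζ : ℕ} (j : Fin n) : e0 j ∈ oddSet n ζ ↔ (j : ℕ) < ζ := by
  simp only [oddSet, mem_filter, mem_univ, true_and, e0]
  show (2 * (j:ℕ)) % 2 = 0 ∧ 2 * (j:ℕ) < 2 * ζ ↔ (j:ℕ) < ζ
  omega

lemma e1_not_mem_oddSet {n ζ : ℕ} (j : Fin n) : e1 j ∉ oddSet n ζ := by
  simp only [oddSet, mem_filter, mem_univ, true_and, e1]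
  show ¬((2 * (j:ℕ) + 1) % 2 = 0 ∧ _); omega


def Aset (n ζ : ℕ) (i : Fin 4) (f : Fin n → Fin 4) : Finset (Fin (2 * n)) :=
  Finset.univ.filter fun x => col n ζ f x = i

lemma mem_Aset {n ζ : ℕ} {i : Fin 4} {f : Fin n → Fin 4} {x : Fin (2 * n)} :
    x ∈ Aset n ζ i f ↔ col n ζ f x = i := by simp [Aset]

lemma Aset_disjoint {n ζ : ℕ} {i i' : Fin 4} (f : Fin n → Fin 4) (h : i ≠ i') :
    Disjoint (Aset n ζ i f) (Aset n ζ i' f) := by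
  rw [Finset.disjoint_left]
  intro x hx hx'
  rw [mem_Aset] at hx hx'
  exact h (hx ▸ hx' ▸ rfl)

-- membership of union of two Asets via a Finset of colors
lemma mem_Aset_union {n ζ : ℕ} {a b : Fin 4} {f : Fin n → Fin 4} {x : Fin (2 * n)} :
    x ∈ Aset n ζ a f ∪ Aset n ζ b f ↔ col n ζ f x = a ∨ col n ζ f x = b := by
  simp [Aset]

-- the symmetric-difference-paired property for a union of two Asets
lemma isPaired_Aset_union {n ζ : ℕ} (f : Fin n → Fin 4) (a b : Fin 4)
    (hU : ∀ u : Fin 4, (comp4 u = a ∨ comp4 u = b) ↔ ¬(u = a ∨ u = b)) :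
    IsPaired n (((Aset n ζ a f ∪ Aset n ζ b f) \ oddSet n ζ) ∪
      (oddSet n ζ \ (Aset n ζ a f ∪ Aset n ζ b f))) := by
  rw [isPaired_iff]
  intro j
  have he0 : (⟨2 * (j : ℕ), by have := j.isLt; omega⟩ : Fin (2 * n)) = e0 j := rfl
  have he1 : (⟨2 * (j : ℕ) + 1, by have := j.isLt; omega⟩ : Fin (2 * n)) = e1 j := rfl
  rw [he0, he1]
  simp only [Finset.mem_union, Finset.mem_sdiff, mem_Aset, col_e0, col_e1,
    e0_mem_oddSet, e1_not_mem_oddSet]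
  by_cases hj : (j : ℕ) < ζ
  · simp only [hj, if_true]
    have := hU (f j)
    tauto
  · simp [hj]

def colOf (n : ℕ)
    (A : Finset (Fin (2 * n)) × Finset (Fin (2 * n)) × Finset (Fin (2 * n)))
    (x : Fin (2 * n)) : Fin 4 :=
  if x ∈ A.1 then 1 else if x ∈ A.2.1 then 2 else if x ∈ A.2.2 then 3 else 0

lemma colOf_spec {n : ℕ}
    {A : Finset (Fin (2 * n)) × Finset (Fin (2 * n)) × Finset (Fin (2 * n))}
    (hd12 : Disjoint A.1 A.2.1) (hd13 : Disjoint A.1 A.2.2)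
    (hd23 : Disjoint A.2.1 A.2.2) (x : Fin (2 * n)) :
    (colOf n A x = 1 ↔ x ∈ A.1) ∧ (colOf n A x = 2 ↔ x ∈ A.2.1) ∧
      (colOf n A x = 3 ↔ x ∈ A.2.2) := by
  unfold colOf
  by_cases h1 : x ∈ A.1
  · have h2 : x ∉ A.2.1 := fun h => (Finset.disjoint_left.mp hd12) h1 h
    have h3 : x ∉ A.2.2 := fun h => (Finset.disjoint_left.mp hd13) h1 h
    simp [h1, h2, h3]
  · by_cases h2 : x ∈ A.2.1
    · have h3 : x ∉ A.2.2 := fun h => (Finset.disjoint_left.mp hd23) h2 h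
      simp [h1, h2, h3]
    · by_cases h3 : x ∈ A.2.2
      · simp [h1, h2, h3]
      · simp [h1, h2, h3]

lemma isPaired_iff' {n : ℕ} (B : Finset (Fin (2 * n))) :
    IsPaired n B ↔ ∀ j : Fin n, (e0 j ∈ B ↔ e1 j ∈ B) :=
  isPaired_iff B

def fOf (n : ℕ)
    (A : Finset (Fin (2 * n)) × Finset (Fin (2 * n)) × Finset (Fin (2 * n)))
    (j : Fin n) : Fin 4 := colOf n A (e0 j)

lemma colOf_e1 {n ζ : ℕ}
    {A : Finset (Fin (2 * n)) × Finset (Fin (2 * n)) × Finset (Fin (2 * n))}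
    (hd12 : Disjoint A.1 A.2.1) (hd13 : Disjoint A.1 A.2.2)
    (hd23 : Disjoint A.2.1 A.2.2)
    (hP23 : IsPaired n (((A.2.1 ∪ A.2.2) \ oddSet n ζ) ∪ (oddSet n ζ \ (A.2.1 ∪ A.2.2))))
    (hP13 : IsPaired n (((A.2.2 ∪ A.1) \ oddSet n ζ) ∪ (oddSet n ζ \ (A.2.2 ∪ A.1))))
    (j : Fin n) :
    colOf n A (e1 j) =
      if (j : ℕ) < ζ then comp4 (colOf n A (e0 j)) else colOf n A (e0 j) := by
  have hs0 := colOf_spec hd12 hd13 hd23 (e0 j)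
  have hs1 := colOf_spec hd12 hd13 hd23 (e1 j)
  have h23 := (isPaired_iff' _).mp hP23 j
  have h13 := (isPaired_iff' _).mp hP13 j
  simp only [Finset.mem_union, Finset.mem_sdiff, e0_mem_oddSet, e1_not_mem_oddSet] at h23 h13
  simp only [← hs0.1, ← hs0.2.1, ← hs0.2.2, ← hs1.1, ← hs1.2.1, ← hs1.2.2] at h23 h13
  generalize hu : colOf n A (e0 j) = u at h23 h13 ⊢
  generalize hv : colOf n A (e1 j) = v at h23 h13 ⊢
  by_cases hj : (j : ℕ) < ζ
  · simp only [hj, if_true, iff_true, not_false_iff] at h23 h13 ⊢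
    revert h23 h13
    fin_cases u <;> fin_cases v <;> decide
  · simp only [hj, if_false, iff_false, not_false_iff] at h23 h13 ⊢
    revert h23 h13
    fin_cases u <;> fin_cases v <;> decide

lemma col_fOf {n ζ : ℕ}
    {A : Finset (Fin (2 * n)) × Finset (Fin (2 * n)) × Finset (Fin (2 * n))}
    (hd12 : Disjoint A.1 A.2.1) (hd13 : Disjoint A.1 A.2.2)
    (hd23 : Disjoint A.2.1 A.2.2)
    (hP23 : IsPaired n (((A.2.1 ∪ A.2.2) \ oddSet n ζ) ∪ (oddSet n ζ \ (A.2.1 ∪ A.2.2))))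
    (hP13 : IsPaired n (((A.2.2 ∪ A.1) \ oddSet n ζ) ∪ (oddSet n ζ \ (A.2.2 ∪ A.1))))
    (x : Fin (2 * n)) :
    col n ζ (fOf n A) x = colOf n A x := by
  have hx := x.isLt
  set j : Fin n := ⟨(x : ℕ) / 2, by omega⟩ with hjdef
  rcases Nat.mod_two_eq_zero_or_one (x : ℕ) with he | ho
  · have hxe : x = e0 j := by apply Fin.ext; show (x : ℕ) = 2 * ((x : ℕ) / 2); omega
    rw [hxe, col_e0]
    rfl
  · have hxo : x = e1 j := by apply Fin.ext; show (x : ℕ) = 2 * ((x : ℕ) / 2) + 1; omega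
    rw [hxo, col_e1, colOf_e1 hd12 hd13 hd23 hP23 hP13]
    rfl

lemma Aset_fOf {n ζ : ℕ}
    {A : Finset (Fin (2 * n)) × Finset (Fin (2 * n)) × Finset (Fin (2 * n))}
    (hd12 : Disjoint A.1 A.2.1) (hd13 : Disjoint A.1 A.2.2)
    (hd23 : Disjoint A.2.1 A.2.2)
    (hP23 : IsPaired n (((A.2.1 ∪ A.2.2) \ oddSet n ζ) ∪ (oddSet n ζ \ (A.2.1 ∪ A.2.2))))
    (hP13 : IsPaired n (((A.2.2 ∪ A.1) \ oddSet n ζ) ∪ (oddSet n ζ \ (A.2.2 ∪ A.1)))) :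
    Aset n ζ 1 (fOf n A) = A.1 ∧ Aset n ζ 2 (fOf n A) = A.2.1 ∧
      Aset n ζ 3 (fOf n A) = A.2.2 := by
  refine ⟨?_, ?_, ?_⟩ <;>
  · ext x
    rw [mem_Aset, col_fOf hd12 hd13 hd23 hP23 hP13]
    first
      | exact (colOf_spec hd12 hd13 hd23 x).1
      | exact (colOf_spec hd12 hd13 hd23 x).2.1
      | exact (colOf_spec hd12 hd13 hd23 x).2.2

lemma fOf_Aset {n ζ : ℕ} (f : Fin n → Fin 4) :
    fOf n (Aset n ζ 1 f, Aset n ζ 2 f, Aset n ζ 3 f) = f := by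
  funext j
  show colOf n _ (e0 j) = f j
  unfold colOf
  simp only [mem_Aset, col_e0]
  generalize f j = u
  fin_cases u <;> decide

open scoped Classical in
lemma claim1 (n ζ ℓ₁ ℓ₂ ℓ₃ : ℕ) :
    ((Finset.univ :
          Finset (Finset (Fin (2 * n)) × Finset (Fin (2 * n)) × Finset (Fin (2 * n)))).filter
        fun A =>
          Disjoint A.1 A.2.1 ∧ Disjoint A.1 A.2.2 ∧ Disjoint A.2.1 A.2.2 ∧
            A.1.card = 2 * ℓ₁ ∧ A.2.1.card = 2 * ℓ₂ ∧ A.2.2.card = 2 * ℓ₃ ∧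
            IsPaired n (((A.2.1 ∪ A.2.2) \ oddSet n ζ) ∪ (oddSet n ζ \ (A.2.1 ∪ A.2.2))) ∧
            IsPaired n (((A.2.2 ∪ A.1) \ oddSet n ζ) ∪ (oddSet n ζ \ (A.2.2 ∪ A.1)))).card
    = ((Finset.univ : Finset (Fin n → Fin 4)).filter fun f =>
        (Aset n ζ 1 f).card = 2 * ℓ₁ ∧ (Aset n ζ 2 f).card = 2 * ℓ₂ ∧
          (Aset n ζ 3 f).card = 2 * ℓ₃).card := by
  apply Finset.card_nbij' (fun A => fOf n A)
    (fun f => (Aset n ζ 1 f, Aset n ζ 2 f, Aset n ζ 3 f))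
  · intro A hA
    rw [Finset.mem_coe, Finset.mem_filter] at hA
    obtain ⟨-, hd12, hd13, hd23, hc1, hc2, hc3, hP23, hP13⟩ := hA
    obtain ⟨h1, h2, h3⟩ := Aset_fOf (ζ := ζ) hd12 hd13 hd23 hP23 hP13
    rw [Finset.mem_coe, Finset.mem_filter]
    exact ⟨Finset.mem_univ _, by rw [h1]; exact hc1, by rw [h2]; exact hc2,
      by rw [h3]; exact hc3⟩
  · intro f hf
    rw [Finset.mem_coe, Finset.mem_filter] at hf
    obtain ⟨-, hc1, hc2, hc3⟩ := hf
    rw [Finset.mem_coe, Finset.mem_filter]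
    refine ⟨Finset.mem_univ _, Aset_disjoint f (by decide), Aset_disjoint f (by decide),
      Aset_disjoint f (by decide), hc1, hc2, hc3, ?_, ?_⟩
    · exact isPaired_Aset_union f 2 3 (by decide)
    · exact isPaired_Aset_union f 3 1 (by decide)
  · intro A hA
    rw [Finset.mem_coe, Finset.mem_filter] at hA
    obtain ⟨-, hd12, hd13, hd23, hc1, hc2, hc3, hP23, hP13⟩ := hA
    obtain ⟨h1, h2, h3⟩ := Aset_fOf (ζ := ζ) hd12 hd13 hd23 hP23 hP13
    exact Prod.ext h1 (Prod.ext h2 h3)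
  · intro f _
    exact fOf_Aset f

def pairEquiv (n : ℕ) : Fin n × Fin 2 ≃ Fin (2 * n) where
  toFun p := ⟨2 * (p.1 : ℕ) + (p.2 : ℕ), by have := p.1.isLt; have := p.2.isLt; omega⟩
  invFun x := (⟨(x : ℕ) / 2, by have := x.isLt; omega⟩,
    ⟨(x : ℕ) % 2, by omega⟩)
  left_inv p := by
    have h2 := p.2.isLt
    ext
    · show (2 * (p.1 : ℕ) + (p.2 : ℕ)) / 2 = (p.1 : ℕ); omega
    · show (2 * (p.1 : ℕ) + (p.2 : ℕ)) % 2 = (p.2 : ℕ); omega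
  right_inv x := by
    apply Fin.ext
    show 2 * ((x : ℕ) / 2) + (x : ℕ) % 2 = (x : ℕ); omega

lemma sum_pairs {n : ℕ} (g : Fin (2 * n) → ℕ) :
    ∑ x : Fin (2 * n), g x = ∑ j : Fin n, (g (e0 j) + g (e1 j)) := by
  rw [← Equiv.sum_comp (pairEquiv n) g, Fintype.sum_prod_type]
  apply Finset.sum_congr rfl
  intro j _
  rw [Fin.sum_univ_two]
  have h0 : pairEquiv n (j, 0) = e0 j := by
    apply Fin.ext; show 2 * (j : ℕ) + 0 = 2 * (j : ℕ); omega
  have h1 : pairEquiv n (j, 1) = e1 j := rfl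
  rw [h0, h1]

def tlow (n ζ : ℕ) (f : Fin n → Fin 4) : ℕ :=
  (Finset.univ.filter fun j : Fin n => (j : ℕ) < ζ ∧ (f j = 1 ∨ f j = 2)).card

def ahigh (n ζ : ℕ) (i : Fin 4) (f : Fin n → Fin 4) : ℕ :=
  (Finset.univ.filter fun j : Fin n => ¬ (j : ℕ) < ζ ∧ f j = i).card

lemma card_low {n ζ : ℕ} (hζ : ζ ≤ n) :
    (Finset.univ.filter fun j : Fin n => (j : ℕ) < ζ).card = ζ := by
  rcases eq_or_lt_of_le hζ with rfl | h
  · have h2 : (Finset.univ.filter fun j : Fin ζ => (j : ℕ) < ζ) = Finset.univ := by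
      apply Finset.filter_true_of_mem; intro j _; exact j.isLt
    rw [h2, Finset.card_univ, Fintype.card_fin]
  · have h2 : (Finset.univ.filter fun j : Fin n => (j : ℕ) < ζ)
        = Finset.Iio (⟨ζ, h⟩ : Fin n) := by
      ext j; simp [Finset.mem_Iio, Fin.lt_def]
    rw [h2, Fin.card_Iio]

lemma card_Aset1 {n ζ : ℕ} (f : Fin n → Fin 4) :
    (Aset n ζ 1 f).card = tlow n ζ f + 2 * ahigh n ζ 1 f := by
  unfold Aset tlow ahigh
  rw [Finset.card_filter, Finset.card_filter, Finset.card_filter, sum_pairs]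
  rw [Finset.mul_sum, ← Finset.sum_add_distrib]
  apply Finset.sum_congr rfl
  intro j _
  rw [col_e0, col_e1]
  by_cases hj : (j : ℕ) < ζ
  · simp only [hj, if_true, not_true, false_and, if_false, true_and, mul_zero, add_zero]
    generalize f j = u
    fin_cases u <;> decide
  · simp only [hj, if_false, not_false_iff, true_and, false_and, zero_add]
    generalize f j = u
    fin_cases u <;> decide

lemma card_Aset2 {n ζ : ℕ} (f : Fin n → Fin 4) :
    (Aset n ζ 2 f).card = tlow n ζ f + 2 * ahigh n ζ 2 f := by
  unfold Aset tlow ahigh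
  rw [Finset.card_filter, Finset.card_filter, Finset.card_filter, sum_pairs]
  rw [Finset.mul_sum, ← Finset.sum_add_distrib]
  apply Finset.sum_congr rfl
  intro j _
  rw [col_e0, col_e1]
  by_cases hj : (j : ℕ) < ζ
  · simp only [hj, if_true, not_true, false_and, if_false, true_and, mul_zero, add_zero]
    generalize f j = u
    fin_cases u <;> decide
  · simp only [hj, if_false, not_false_iff, true_and, false_and, zero_add]
    generalize f j = u
    fin_cases u <;> decide

lemma card_Aset3 {n ζ : ℕ} (hζ : ζ ≤ n) (f : Fin n → Fin 4) :
    (Aset n ζ 3 f).card + tlow n ζ f = ζ + 2 * ahigh n ζ 3 f := by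
  have key : (Aset n ζ 3 f).card + tlow n ζ f
      = (Finset.univ.filter fun j : Fin n => (j : ℕ) < ζ).card + 2 * ahigh n ζ 3 f := by
    unfold Aset tlow ahigh
    rw [Finset.card_filter, Finset.card_filter, Finset.card_filter, Finset.card_filter,
      sum_pairs]
    rw [Finset.mul_sum, ← Finset.sum_add_distrib, ← Finset.sum_add_distrib]
    apply Finset.sum_congr rfl
    intro j _
    rw [col_e0, col_e1]
    by_cases hj : (j : ℕ) < ζ
    · simp only [hj, if_true, not_true, false_and, if_false, true_and, mul_zero, add_zero]
      generalize f j = u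
      fin_cases u <;> decide
    · simp only [hj, if_false, not_false_iff, true_and, false_and, zero_add, add_zero]
      generalize f j = u
      fin_cases u <;> decide
  rw [key, card_low hζ]

lemma sum_split {n ζ m : ℕ} (h : n = ζ + m) (F : Fin n → ℕ) :
    ∑ j : Fin n, F j = (∑ i : Fin ζ, F ⟨(i : ℕ), by omega⟩)
      + ∑ k : Fin m, F ⟨ζ + (k : ℕ), by omega⟩ := by
  subst h
  rw [← Equiv.sum_comp finSumFinEquiv F, Fintype.sum_sum_type]
  congr 1

lemma tlow_eq {n ζ m : ℕ} (h : n = ζ + m) (f : Fin n → Fin 4) :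
    tlow n ζ f = (Finset.univ.filter fun i : Fin ζ =>
      f ⟨(i : ℕ), by omega⟩ = 1 ∨ f ⟨(i : ℕ), by omega⟩ = 2).card := by
  unfold tlow
  rw [Finset.card_filter, Finset.card_filter, sum_split h]
  have h2 : ∀ k : Fin m, (if ((⟨ζ + (k : ℕ), by omega⟩ : Fin n) : ℕ) < ζ ∧
      (f ⟨ζ + (k : ℕ), by omega⟩ = 1 ∨ f ⟨ζ + (k : ℕ), by omega⟩ = 2) then 1 else 0) = 0 := by
    intro k
    rw [if_neg]
    intro ⟨hlt, _⟩
    have : ζ + (k : ℕ) < ζ := hlt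
    omega
  rw [Finset.sum_congr rfl fun k _ => h2 k, Finset.sum_const, smul_zero, add_zero]
  apply Finset.sum_congr rfl
  intro i _
  have hlt : ((⟨(i : ℕ), by omega⟩ : Fin n) : ℕ) < ζ := i.isLt
  simp only [hlt, true_and]

lemma ahigh_eq {n ζ m : ℕ} (h : n = ζ + m) (c : Fin 4) (f : Fin n → Fin 4) :
    ahigh n ζ c f = (Finset.univ.filter fun k : Fin m =>
      f ⟨ζ + (k : ℕ), by omega⟩ = c).card := by
  unfold ahigh
  rw [Finset.card_filter, Finset.card_filter, sum_split h]
  have h2 : ∀ i : Fin ζ, (if ¬ ((⟨(i : ℕ), by omega⟩ : Fin n) : ℕ) < ζ ∧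
      f ⟨(i : ℕ), by omega⟩ = c then 1 else 0) = 0 := by
    intro i
    rw [if_neg]
    intro ⟨hlt, _⟩
    exact hlt i.isLt
  rw [Finset.sum_congr rfl fun i _ => h2 i, Finset.sum_const, smul_zero, zero_add]
  apply Finset.sum_congr rfl
  intro k _
  have hlt : ¬ ((⟨ζ + (k : ℕ), by omega⟩ : Fin n) : ℕ) < ζ := by
    show ¬ ζ + (k : ℕ) < ζ; omega
  simp only [hlt, true_and, not_false_iff]

lemma card_split_prod {n ζ m : ℕ} (h : n = ζ + m)
    (S : (Fin n → Fin 4) → Prop) [DecidablePred S]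
    (P : (Fin ζ → Fin 4) → Prop) (Q : (Fin m → Fin 4) → Prop)
    [DecidablePred P] [DecidablePred Q]
    (hS : ∀ f : Fin n → Fin 4, S f ↔
      P (fun i => f ⟨(i : ℕ), by omega⟩) ∧ Q (fun k => f ⟨ζ + (k : ℕ), by omega⟩)) :
    ((Finset.univ : Finset (Fin n → Fin 4)).filter S).card
      = ((Finset.univ : Finset (Fin ζ → Fin 4)).filter P).card *
        ((Finset.univ : Finset (Fin m → Fin 4)).filter Q).card := by
  rw [Finset.filter_congr (fun f _ => hS f)]
  rw [← Finset.card_product, ← Finset.filter_product, Finset.univ_product_univ]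
  apply Finset.card_nbij'
    (fun f => ((fun i : Fin ζ => f ⟨(i : ℕ), by omega⟩),
               (fun k : Fin m => f ⟨ζ + (k : ℕ), by omega⟩)))
    (fun p => fun j : Fin n => if hj : (j : ℕ) < ζ then p.1 ⟨(j : ℕ), hj⟩
      else p.2 ⟨(j : ℕ) - ζ, by have := j.isLt; omega⟩)
  · intro f hf
    rw [Finset.mem_coe, Finset.mem_filter] at hf ⊢
    exact ⟨Finset.mem_univ _, hf.2⟩
  · intro p hp
    rw [Finset.mem_coe, Finset.mem_filter] at hp ⊢
    refine ⟨Finset.mem_univ _, ?_, ?_⟩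
    · have : (fun i : Fin ζ => if hj : ((⟨(i : ℕ), by omega⟩ : Fin n) : ℕ) < ζ
          then p.1 ⟨((⟨(i : ℕ), by omega⟩ : Fin n) : ℕ), hj⟩
          else p.2 ⟨((⟨(i : ℕ), by omega⟩ : Fin n) : ℕ) - ζ, by omega⟩) = p.1 := by
        funext i
        rw [dif_pos i.isLt]
      rw [this]
      exact hp.2.1
    · have : (fun k : Fin m => if hj : ((⟨ζ + (k : ℕ), by omega⟩ : Fin n) : ℕ) < ζ
          then p.1 ⟨((⟨ζ + (k : ℕ), by omega⟩ : Fin n) : ℕ), hj⟩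
          else p.2 ⟨((⟨ζ + (k : ℕ), by omega⟩ : Fin n) : ℕ) - ζ, by omega⟩) = p.2 := by
        funext k
        rw [dif_neg (by show ¬ ζ + (k : ℕ) < ζ; omega)]
        exact congrArg p.2 (Fin.ext (by show ζ + (k : ℕ) - ζ = (k : ℕ); omega))
      rw [this]
      exact hp.2.2
  · intro f _
    funext j
    dsimp only
    by_cases hj : (j : ℕ) < ζ
    · rw [dif_pos hj]
    · rw [dif_neg hj]
      exact congrArg f (Fin.ext (by show ζ + ((j : ℕ) - ζ) = (j : ℕ); omega))
  · intro p _
    dsimp only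
    apply Prod.ext
    · funext q
      dsimp only
      rw [dif_pos q.isLt]
    · funext q
      dsimp only
      rw [dif_neg (by show ¬ ζ + (q : ℕ) < ζ; omega)]
      exact congrArg p.2 (Fin.ext (by show ζ + (q : ℕ) - ζ = (q : ℕ); omega))

lemma card_low_funcs (ζ t : ℕ) :
    ((Finset.univ : Finset (Fin ζ → Fin 4)).filter fun g =>
        (Finset.univ.filter fun i => g i = 1 ∨ g i = 2).card = t).card
      = ζ.choose t * 2 ^ ζ := by
  have hcard : ((Finset.powersetCard t (Finset.univ : Finset (Fin ζ))) ×ˢ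
      (Finset.univ : Finset (Fin ζ → Bool))).card = ζ.choose t * 2 ^ ζ := by
    rw [Finset.card_product, Finset.card_powersetCard, Finset.card_univ, Finset.card_univ,
      Fintype.card_fin, Fintype.card_fun, Fintype.card_bool, Fintype.card_fin]
  rw [← hcard]
  apply Finset.card_nbij'
    (fun g => ((Finset.univ.filter fun i => g i = 1 ∨ g i = 2),
      fun i => decide (g i = 2 ∨ g i = 3)))
    (fun p => fun i => if i ∈ p.1 then (if p.2 i then 2 else 1) else (if p.2 i then 3 else 0))
  · intro g hg
    rw [Finset.mem_coe, Finset.mem_filter] at hg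
    rw [Finset.mem_coe, Finset.mem_product, Finset.mem_powersetCard]
    exact ⟨⟨Finset.subset_univ _, hg.2⟩, Finset.mem_univ _⟩
  · intro p hp
    rw [Finset.mem_coe, Finset.mem_product, Finset.mem_powersetCard] at hp
    rw [Finset.mem_coe, Finset.mem_filter]
    refine ⟨Finset.mem_univ _, ?_⟩
    have : (Finset.univ.filter fun i =>
        (if i ∈ p.1 then (if p.2 i then 2 else 1) else (if p.2 i then 3 else 0) : Fin 4) = 1 ∨
        (if i ∈ p.1 then (if p.2 i then 2 else 1) else (if p.2 i then 3 else 0) : Fin 4) = 2)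
        = p.1 := by
      ext i
      rw [Finset.mem_filter]
      by_cases hi : i ∈ p.1 <;> cases hb : p.2 i <;> simp [hi, hb]
    rw [this]
    exact hp.1.2
  · intro g _
    funext i
    dsimp only
    simp only [Finset.mem_filter, Finset.mem_univ, true_and]
    have key : ∀ u : Fin 4, (if u = 1 ∨ u = 2 then (if decide (u = 2 ∨ u = 3) = true then 2 else 1)
        else (if decide (u = 2 ∨ u = 3) = true then 3 else 0) : Fin 4) = u := by decide
    convert key (g i)
  · intro p hp
    rw [Finset.mem_coe, Finset.mem_product, Finset.mem_powersetCard] at hp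
    dsimp only
    apply Prod.ext
    · dsimp only
      ext i
      rw [Finset.mem_filter]
      by_cases hi : i ∈ p.1 <;> cases hb : p.2 i <;> simp [hi, hb]
    · funext i
      dsimp only
      by_cases hi : i ∈ p.1 <;> simp only [hi, ↓reduceIte] <;> cases hb : p.2 i <;> simp [hb]

lemma count_pair {α β : Type*} [Fintype α] [Fintype β] (P : α → Prop) (R : α → β → Prop)
    [DecidablePred P] [∀ a, DecidablePred (R a)] (c : ℕ)
    (hc : ∀ a, P a → (Finset.univ.filter (R a)).card = c) :
    ((Finset.univ : Finset (α × β)).filter fun p => P p.1 ∧ R p.1 p.2).card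
      = (Finset.univ.filter P).card * c := by
  rw [Finset.card_filter, Finset.card_filter, Fintype.sum_prod_type, Finset.sum_mul]
  apply Finset.sum_congr rfl
  intro a _
  by_cases hP : P a
  · simp only [hP, true_and, if_true, one_mul]
    rw [← Finset.card_filter, hc a hP]
  · simp only [hP, false_and, if_false, zero_mul]
    simp


lemma count_pair' {α β : Type*} [Fintype α] [Fintype β] (S : α × β → Prop) [DecidablePred S]
    (P : α → Prop) (R : α → β → Prop) [DecidablePred P] [∀ a, DecidablePred (R a)]
    (hS : ∀ p, S p ↔ P p.1 ∧ R p.1 p.2) (c : ℕ)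
    (hc : ∀ a, P a → (Finset.univ.filter (R a)).card = c) :
    ((Finset.univ : Finset (α × β)).filter S).card = (Finset.univ.filter P).card * c := by
  rw [Finset.filter_congr (fun p _ => hS p)]
  exact count_pair P R c hc

lemma count_sets_cond {m : ℕ} (a : ℕ) (C : Finset (Fin m)) :
    ((Finset.univ : Finset (Finset (Fin m))).filter fun B => B ⊆ C ∧ B.card = a).card
      = C.card.choose a := by
  have : ((Finset.univ : Finset (Finset (Fin m))).filter fun B => B ⊆ C ∧ B.card = a)
      = Finset.powersetCard a C := by
    ext B
    rw [Finset.mem_filter, Finset.mem_powersetCard]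
    simp
  rw [this, Finset.card_powersetCard]

lemma count_funcs_fibers (m a1 a2 a3 : ℕ) :
    ((Finset.univ : Finset (Fin m → Fin 4)).filter fun h =>
        (Finset.univ.filter fun k => h k = 1).card = a1 ∧
        (Finset.univ.filter fun k => h k = 2).card = a2 ∧
        (Finset.univ.filter fun k => h k = 3).card = a3).card
      = m.choose a1 * ((m - a1).choose a2 * (m - a1 - a2).choose a3) := by
  -- step 1: biject with triples of disjoint sets
  have step1 : ((Finset.univ : Finset (Fin m → Fin 4)).filter fun h =>
        (Finset.univ.filter fun k => h k = 1).card = a1 ∧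
        (Finset.univ.filter fun k => h k = 2).card = a2 ∧
        (Finset.univ.filter fun k => h k = 3).card = a3).card
      = ((Finset.univ :
            Finset (Finset (Fin m) × Finset (Fin m) × Finset (Fin m))).filter fun B =>
          B.1.card = a1 ∧ (Disjoint B.1 B.2.1 ∧ B.2.1.card = a2) ∧
            (Disjoint B.1 B.2.2 ∧ Disjoint B.2.1 B.2.2 ∧ B.2.2.card = a3)).card := by
    apply Finset.card_nbij'
      (fun h => ((Finset.univ.filter fun k => h k = 1),
        (Finset.univ.filter fun k => h k = 2), (Finset.univ.filter fun k => h k = 3)))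
      (fun B => fun k => if k ∈ B.1 then 1 else if k ∈ B.2.1 then 2 else
        if k ∈ B.2.2 then 3 else 0)
    · intro h hh
      rw [Finset.mem_coe, Finset.mem_filter] at hh
      obtain ⟨-, h1, h2, h3⟩ := hh
      rw [Finset.mem_coe, Finset.mem_filter]
      refine ⟨Finset.mem_univ _, h1, ⟨?_, h2⟩, ⟨?_, ?_, h3⟩⟩ <;>
      · rw [Finset.disjoint_left]
        intro k hk hk'
        rw [Finset.mem_filter] at hk hk'
        rw [hk.2] at hk'
        exact absurd hk'.2 (by decide)
    · intro B hB
      rw [Finset.mem_coe, Finset.mem_filter] at hB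
      obtain ⟨-, h1, ⟨hd12, h2⟩, ⟨hd13, hd23, h3⟩⟩ := hB
      rw [Finset.mem_coe, Finset.mem_filter]
      refine ⟨Finset.mem_univ _, ?_, ?_, ?_⟩
      · have : (Finset.univ.filter fun k =>
            (if k ∈ B.1 then 1 else if k ∈ B.2.1 then 2 else
              if k ∈ B.2.2 then 3 else (0 : Fin 4)) = 1) = B.1 := by
          ext k
          rw [Finset.mem_filter]
          by_cases e1 : k ∈ B.1
          · simp [e1]
          · by_cases e2 : k ∈ B.2.1
            · simp [e1, e2]
            · by_cases e3 : k ∈ B.2.2 <;> simp [e1, e2, e3]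
        rw [this]; exact h1
      · have : (Finset.univ.filter fun k =>
            (if k ∈ B.1 then 1 else if k ∈ B.2.1 then 2 else
              if k ∈ B.2.2 then 3 else (0 : Fin 4)) = 2) = B.2.1 := by
          ext k
          rw [Finset.mem_filter]
          by_cases e1 : k ∈ B.1
          · have : k ∉ B.2.1 := fun hk => (Finset.disjoint_left.mp hd12) e1 hk
            simp [e1, this]
          · by_cases e2 : k ∈ B.2.1
            · simp [e1, e2]
            · by_cases e3 : k ∈ B.2.2 <;> simp [e1, e2, e3]
        rw [this]; exact h2
      · have : (Finset.univ.filter fun k =>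
            (if k ∈ B.1 then 1 else if k ∈ B.2.1 then 2 else
              if k ∈ B.2.2 then 3 else (0 : Fin 4)) = 3) = B.2.2 := by
          ext k
          rw [Finset.mem_filter]
          by_cases e1 : k ∈ B.1
          · have : k ∉ B.2.2 := fun hk => (Finset.disjoint_left.mp hd13) e1 hk
            simp [e1, this]
          · by_cases e2 : k ∈ B.2.1
            · have : k ∉ B.2.2 := fun hk => (Finset.disjoint_left.mp hd23) e2 hk
              simp [e1, e2, this]
            · by_cases e3 : k ∈ B.2.2 <;> simp [e1, e2, e3]
        rw [this]; exact h3
    · intro h _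
      funext k
      dsimp only
      simp only [Finset.mem_filter, Finset.mem_univ, true_and]
      generalize h k = u
      fin_cases u <;> decide
    · intro B hB
      rw [Finset.mem_coe, Finset.mem_filter] at hB
      obtain ⟨-, h1, ⟨hd12, h2⟩, ⟨hd13, hd23, h3⟩⟩ := hB
      dsimp only
      refine Prod.ext ?_ (Prod.ext ?_ ?_) <;> dsimp only
      · ext k
        rw [Finset.mem_filter]
        by_cases e1 : k ∈ B.1
        · simp [e1]
        · by_cases e2 : k ∈ B.2.1
          · simp [e1, e2]
          · by_cases e3 : k ∈ B.2.2 <;> simp [e1, e2, e3]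
      · ext k
        rw [Finset.mem_filter]
        by_cases e1 : k ∈ B.1
        · have : k ∉ B.2.1 := fun hk => (Finset.disjoint_left.mp hd12) e1 hk
          simp [e1, this]
        · by_cases e2 : k ∈ B.2.1
          · simp [e1, e2]
          · by_cases e3 : k ∈ B.2.2 <;> simp [e1, e2, e3]
      · ext k
        rw [Finset.mem_filter]
        by_cases e1 : k ∈ B.1
        · have : k ∉ B.2.2 := fun hk => (Finset.disjoint_left.mp hd13) e1 hk
          simp [e1, this]
        · by_cases e2 : k ∈ B.2.1
          · have : k ∉ B.2.2 := fun hk => (Finset.disjoint_left.mp hd23) e2 hk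
            simp [e1, e2, this]
          · by_cases e3 : k ∈ B.2.2 <;> simp [e1, e2, e3]
  rw [step1]
  -- step 2: count the triples by peeling
  rw [count_pair' _ (fun B1 : Finset (Fin m) => B1.card = a1)
    (fun B1 p => (Disjoint B1 p.1 ∧ p.1.card = a2) ∧
      (Disjoint B1 p.2 ∧ Disjoint p.1 p.2 ∧ p.2.card = a3))
    (fun p => by tauto)
    ((m - a1).choose a2 * (m - a1 - a2).choose a3) ?inner]
  case inner =>
    intro B1 hB1
    rw [count_pair' _ (fun B2 : Finset (Fin m) => Disjoint B1 B2 ∧ B2.card = a2)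
      (fun B2 B3 => Disjoint B1 B3 ∧ Disjoint B2 B3 ∧ B3.card = a3)
      (fun p => by tauto)
      ((m - a1 - a2).choose a3) ?inner2]
    case inner2 =>
      intro B2 hB2
      have hsub : B2 ⊆ Finset.univ \ B1 :=
        Finset.subset_sdiff.mpr ⟨Finset.subset_univ _, hB2.1.symm⟩
      have heq : (Finset.univ.filter fun B3 =>
          Disjoint B1 B3 ∧ Disjoint B2 B3 ∧ B3.card = a3)
          = (Finset.univ.filter fun B3 : Finset (Fin m) =>
            B3 ⊆ (Finset.univ \ B1) \ B2 ∧ B3.card = a3) := by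
        apply Finset.filter_congr
        intro B3 _
        rw [Finset.subset_sdiff, Finset.subset_sdiff]
        constructor
        · rintro ⟨d1, d2, hc⟩
          exact ⟨⟨⟨Finset.subset_univ _, d1.symm⟩, d2.symm⟩, hc⟩
        · rintro ⟨⟨⟨-, d1⟩, d2⟩, hc⟩
          exact ⟨d1.symm, d2.symm, hc⟩
      rw [heq, count_sets_cond]
      congr 1
      rw [Finset.card_sdiff_of_subset hsub, Finset.card_sdiff_of_subset (Finset.subset_univ _),
        Finset.card_univ, Fintype.card_fin, hB2.2, hB1]
    congr 1
    · have heq : (Finset.univ.filter fun B2 : Finset (Fin m) =>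
          Disjoint B1 B2 ∧ B2.card = a2)
          = (Finset.univ.filter fun B2 : Finset (Fin m) =>
            B2 ⊆ Finset.univ \ B1 ∧ B2.card = a2) := by
        apply Finset.filter_congr
        intro B2 _
        rw [Finset.subset_sdiff]
        constructor
        · rintro ⟨d1, hc⟩
          exact ⟨⟨Finset.subset_univ _, d1.symm⟩, hc⟩
        · rintro ⟨⟨-, d1⟩, hc⟩
          exact ⟨d1.symm, hc⟩
      rw [heq, count_sets_cond, Finset.card_sdiff_of_subset (Finset.subset_univ _),
        Finset.card_univ, Fintype.card_fin, hB1]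
  congr 1
  have heq : (Finset.univ.filter fun B1 : Finset (Fin m) => B1.card = a1)
      = (Finset.univ.filter fun B1 : Finset (Fin m) =>
        B1 ⊆ Finset.univ ∧ B1.card = a1) := by
    apply Finset.filter_congr
    intro B1 _
    simp
  rw [heq, count_sets_cond, Finset.card_univ, Fintype.card_fin]

/-- The multinomial coefficient `C(k₁+k₂+k₃+k₄; k₁,k₂,k₃,k₄)`, defined to be `0` if
any argument is negative. -/
def mult4 (k₁ k₂ k₃ k₄ : ℤ) : ℕ :=
  if 0 ≤ k₁ ∧ 0 ≤ k₂ ∧ 0 ≤ k₃ ∧ 0 ≤ k₄ then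
    (k₁ + k₂ + k₃ + k₄).toNat.factorial /
      (k₁.toNat.factorial * k₂.toNat.factorial * k₃.toNat.factorial * k₄.toNat.factorial)
  else 0

lemma mult4_zero_of_neg {k1 k2 k3 k4 : ℤ} (h : ¬(0 ≤ k1 ∧ 0 ≤ k2 ∧ 0 ≤ k3 ∧ 0 ≤ k4)) :
    mult4 k1 k2 k3 k4 = 0 := by rw [mult4, if_neg h]

lemma mult4_natCast (a b c d : ℕ) :
    mult4 a b c d = (a + b + c + d).choose a *
      ((b + c + d).choose b * (c + d).choose c) := by
  rw [mult4, if_pos ⟨Int.natCast_nonneg a, Int.natCast_nonneg b, Int.natCast_nonneg c,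
    Int.natCast_nonneg d⟩]
  have ht : ((a : ℤ) + b + c + d).toNat = a + b + c + d := by omega
  have ta : ((a : ℤ)).toNat = a := by omega
  have tb : ((b : ℤ)).toNat = b := by omega
  have tc : ((c : ℤ)).toNat = c := by omega
  have td : ((d : ℤ)).toNat = d := by omega
  rw [ht, ta, tb, tc, td]
  have h1 := Nat.choose_mul_factorial_mul_factorial (Nat.le_add_right c d)
  rw [Nat.add_sub_cancel_left] at h1
  have h2 := Nat.choose_mul_factorial_mul_factorial (Nat.le_add_right b (c + d))
  rw [Nat.add_sub_cancel_left] at h2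
  have h2' : (b + c + d).choose b * b.factorial * (c + d).factorial
      = (b + c + d).factorial := by
    rw [show b + (c + d) = b + c + d from by omega] at h2
    exact h2
  have h3 := Nat.choose_mul_factorial_mul_factorial (Nat.le_add_right a (b + c + d))
  rw [Nat.add_sub_cancel_left] at h3
  have h3' : (a + b + c + d).choose a * a.factorial * (b + c + d).factorial
      = (a + b + c + d).factorial := by
    rw [show a + (b + c + d) = a + b + c + d from by omega] at h3
    exact h3
  apply Nat.div_eq_of_eq_mul_left
  · exact Nat.mul_pos (Nat.mul_pos (Nat.mul_pos (Nat.factorial_pos a)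
      (Nat.factorial_pos b)) (Nat.factorial_pos c)) (Nat.factorial_pos d)
  · rw [← h3', ← h2', ← h1]
    ring

def NhighSet (m t' ζ l1 l2 l3 : ℕ) : Finset (Fin m → Fin 4) :=
  Finset.univ.filter fun h =>
    t' + 2 * (Finset.univ.filter fun k => h k = 1).card = 2 * l1 ∧
    t' + 2 * (Finset.univ.filter fun k => h k = 2).card = 2 * l2 ∧
    ζ + 2 * (Finset.univ.filter fun k => h k = 3).card = 2 * l3 + t'

lemma Nhigh_odd (m t' ζ l1 l2 l3 : ℕ) (hodd : t' % 2 = 1) :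
    (NhighSet m t' ζ l1 l2 l3).card = 0 := by
  rw [NhighSet, Finset.filter_false_of_mem, Finset.card_empty]
  rintro h - ⟨h1, -, -⟩
  omega

lemma Nhigh_eval (m ζ l1 l2 l3 j : ℕ) (hζeven : ζ % 2 = 0) (hj : j ≤ ζ / 2) :
    (NhighSet m (ζ - 2 * j) ζ l1 l2 l3).card
      = mult4 ((l1 : ℤ) - ((ζ / 2 : ℕ) : ℤ) + (j : ℤ))
          ((l2 : ℤ) - ((ζ / 2 : ℕ) : ℤ) + (j : ℤ)) ((l3 : ℤ) - (j : ℤ))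
          (((ζ + m : ℕ) : ℤ) - (l1 : ℤ) - (l2 : ℤ) - (l3 : ℤ) - (j : ℤ)) := by
  set t' := ζ - 2 * j with ht'def
  have htζ : t' + 2 * j = ζ := by omega
  by_cases c1 : t' ≤ 2 * l1
  · by_cases c2 : t' ≤ 2 * l2
    · by_cases c3 : ζ ≤ 2 * l3 + t'
      · -- solvable case
        obtain ⟨α1, hα1⟩ : ∃ x, t' + 2 * x = 2 * l1 := ⟨l1 - t' / 2, by omega⟩
        obtain ⟨α2, hα2⟩ : ∃ x, t' + 2 * x = 2 * l2 := ⟨l2 - t' / 2, by omega⟩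
        obtain ⟨α3, hα3⟩ : ∃ x, ζ + 2 * x = 2 * l3 + t' := ⟨(2 * l3 + t' - ζ) / 2, by omega⟩
        have hfc : NhighSet m t' ζ l1 l2 l3 = Finset.univ.filter fun h : Fin m → Fin 4 =>
            (Finset.univ.filter fun k => h k = 1).card = α1 ∧
            (Finset.univ.filter fun k => h k = 2).card = α2 ∧
            (Finset.univ.filter fun k => h k = 3).card = α3 := by
          rw [NhighSet]
          apply Finset.filter_congr
          intro h _
          constructor
          · rintro ⟨e1, e2, e3⟩
            refine ⟨by omega, by omega, by omega⟩
          · rintro ⟨e1, e2, e3⟩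
            refine ⟨by omega, by omega, by omega⟩
        rw [hfc, count_funcs_fibers]
        by_cases csum : α1 + α2 + α3 ≤ m
        · obtain ⟨d, hd⟩ : ∃ d, m = α1 + α2 + α3 + d := ⟨m - α1 - α2 - α3, by omega⟩
          have harg1 : (l1 : ℤ) - ((ζ / 2 : ℕ) : ℤ) + (j : ℤ) = (α1 : ℤ) := by omega
          have harg2 : (l2 : ℤ) - ((ζ / 2 : ℕ) : ℤ) + (j : ℤ) = (α2 : ℤ) := by omega
          have harg3 : (l3 : ℤ) - (j : ℤ) = (α3 : ℤ) := by omega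
          have harg4 : ((ζ + m : ℕ) : ℤ) - (l1 : ℤ) - (l2 : ℤ) - (l3 : ℤ) - (j : ℤ)
              = ((d : ℕ) : ℤ) := by
            push_cast
            omega
          rw [harg1, harg2, harg3, harg4, mult4_natCast]
          rw [show m - α1 - α2 = α3 + d from by omega]
          rw [show m - α1 = α2 + α3 + d from by omega]
          rw [show m = α1 + α2 + α3 + d from hd]
        · have hzero : m.choose α1 * ((m - α1).choose α2 * (m - α1 - α2).choose α3) = 0 := by
            by_cases d1 : m < α1
            · rw [Nat.choose_eq_zero_of_lt d1, zero_mul]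
            · by_cases d2 : m - α1 < α2
              · rw [Nat.choose_eq_zero_of_lt d2, zero_mul, mul_zero]
              · have h0 : (m - α1 - α2).choose α3 = 0 :=
                  Nat.choose_eq_zero_of_lt (by omega)
                rw [h0, mul_zero, mul_zero]
          rw [hzero]
          symm
          apply mult4_zero_of_neg
          rintro ⟨-, -, -, h4⟩
          omega
      · rw [show (NhighSet m t' ζ l1 l2 l3).card = 0 from by
          rw [NhighSet, Finset.filter_false_of_mem, Finset.card_empty]
          rintro h - ⟨-, -, e3⟩; omega]
        symm
        apply mult4_zero_of_neg
        rintro ⟨-, -, h3, -⟩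
        omega
    · rw [show (NhighSet m t' ζ l1 l2 l3).card = 0 from by
        rw [NhighSet, Finset.filter_false_of_mem, Finset.card_empty]
        rintro h - ⟨-, e2, -⟩; omega]
      symm
      apply mult4_zero_of_neg
      rintro ⟨-, h2, -, -⟩
      omega
  · rw [show (NhighSet m t' ζ l1 l2 l3).card = 0 from by
      rw [NhighSet, Finset.filter_false_of_mem, Finset.card_empty]
      rintro h - ⟨e1, -, -⟩; omega]
    symm
    apply mult4_zero_of_neg
    rintro ⟨h1, -, -, -⟩
    omega

lemma claim2 (n ζ l1 l2 l3 : ℕ) (hζeven : ζ % 2 = 0) (hζ : ζ ≤ n) :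
    ((Finset.univ : Finset (Fin n → Fin 4)).filter fun f =>
        (Aset n ζ 1 f).card = 2 * l1 ∧ (Aset n ζ 2 f).card = 2 * l2 ∧
          (Aset n ζ 3 f).card = 2 * l3).card
      = 2 ^ ζ * ∑ j ∈ Finset.range (ζ / 2 + 1),
          ζ.choose (2 * j) *
            mult4 ((l1 : ℤ) - ((ζ / 2 : ℕ) : ℤ) + (j : ℤ))
              ((l2 : ℤ) - ((ζ / 2 : ℕ) : ℤ) + (j : ℤ)) ((l3 : ℤ) - (j : ℤ))
              ((n : ℤ) - (l1 : ℤ) - (l2 : ℤ) - (l3 : ℤ) - (j : ℤ)) := by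
  obtain ⟨m, hm⟩ : ∃ m, n = ζ + m := ⟨n - ζ, by omega⟩
  -- rewrite the predicate in terms of tlow / ahigh
  have hpred : ∀ f : Fin n → Fin 4,
      ((Aset n ζ 1 f).card = 2 * l1 ∧ (Aset n ζ 2 f).card = 2 * l2 ∧
        (Aset n ζ 3 f).card = 2 * l3) ↔
      (tlow n ζ f + 2 * ahigh n ζ 1 f = 2 * l1 ∧
        tlow n ζ f + 2 * ahigh n ζ 2 f = 2 * l2 ∧
        ζ + 2 * ahigh n ζ 3 f = 2 * l3 + tlow n ζ f) := by
    intro f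
    have e1 := card_Aset1 (ζ := ζ) f
    have e2 := card_Aset2 (ζ := ζ) f
    have e3 := card_Aset3 hζ f
    omega
  rw [Finset.filter_congr (fun f _ => hpred f)]
  have hle : ∀ f : Fin n → Fin 4, tlow n ζ f ≤ ζ := by
    intro f
    calc tlow n ζ f ≤ (Finset.univ.filter fun j : Fin n => (j : ℕ) < ζ).card := by
          unfold tlow
          apply Finset.card_le_card
          intro j hj
          rw [Finset.mem_filter] at hj ⊢
          exact ⟨hj.1, hj.2.1⟩
      _ = ζ := card_low hζ
  -- group by the value of tlow
  have step2 : (Finset.univ.filter fun f : Fin n → Fin 4 =>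
      tlow n ζ f + 2 * ahigh n ζ 1 f = 2 * l1 ∧
        tlow n ζ f + 2 * ahigh n ζ 2 f = 2 * l2 ∧
        ζ + 2 * ahigh n ζ 3 f = 2 * l3 + tlow n ζ f).card
    = ∑ t' ∈ Finset.range (ζ + 1), (Finset.univ.filter fun f : Fin n → Fin 4 =>
        tlow n ζ f = t' ∧ (t' + 2 * ahigh n ζ 1 f = 2 * l1 ∧
          t' + 2 * ahigh n ζ 2 f = 2 * l2 ∧
          ζ + 2 * ahigh n ζ 3 f = 2 * l3 + t')).card := by
    simp only [Finset.card_filter]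
    rw [Finset.sum_comm]
    apply Finset.sum_congr rfl
    intro f _
    have h1 : ∀ t' ∈ Finset.range (ζ + 1),
        (if (tlow n ζ f = t' ∧ (t' + 2 * ahigh n ζ 1 f = 2 * l1 ∧
          t' + 2 * ahigh n ζ 2 f = 2 * l2 ∧
          ζ + 2 * ahigh n ζ 3 f = 2 * l3 + t')) then 1 else 0)
        = if tlow n ζ f = t' then
            (if (t' + 2 * ahigh n ζ 1 f = 2 * l1 ∧ t' + 2 * ahigh n ζ 2 f = 2 * l2 ∧
              ζ + 2 * ahigh n ζ 3 f = 2 * l3 + t') then (1 : ℕ) else 0) else 0 := by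
      intro t' _
      by_cases h : tlow n ζ f = t'
      · simp [h]
      · simp [h]
    rw [Finset.sum_congr rfl h1, Finset.sum_ite_eq,
      if_pos (Finset.mem_range.mpr (by have := hle f; omega))]
  rw [step2]
  -- factor each summand
  have step3 : ∀ t' : ℕ, (Finset.univ.filter fun f : Fin n → Fin 4 =>
      tlow n ζ f = t' ∧ (t' + 2 * ahigh n ζ 1 f = 2 * l1 ∧
        t' + 2 * ahigh n ζ 2 f = 2 * l2 ∧
        ζ + 2 * ahigh n ζ 3 f = 2 * l3 + t')).card
      = (ζ.choose t' * 2 ^ ζ) * (NhighSet m t' ζ l1 l2 l3).card := by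
    intro t'
    rw [card_split_prod hm _
      (fun g : Fin ζ → Fin 4 =>
        (Finset.univ.filter fun i => g i = 1 ∨ g i = 2).card = t')
      (fun h : Fin m → Fin 4 =>
        t' + 2 * (Finset.univ.filter fun k => h k = 1).card = 2 * l1 ∧
        t' + 2 * (Finset.univ.filter fun k => h k = 2).card = 2 * l2 ∧
        ζ + 2 * (Finset.univ.filter fun k => h k = 3).card = 2 * l3 + t')
      (fun f => by
        rw [tlow_eq hm f, ahigh_eq hm 1 f, ahigh_eq hm 2 f, ahigh_eq hm 3 f])]
    rw [card_low_funcs]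
    rfl
  rw [Finset.sum_congr rfl (fun t' _ => step3 t')]
  -- discard odd t'
  have hkill : ∀ t' ∈ Finset.range (ζ + 1),
      (ζ.choose t' * 2 ^ ζ) * (NhighSet m t' ζ l1 l2 l3).card ≠ 0 → t' % 2 = 0 := by
    intro t' _ hne
    by_contra hodd
    rw [Nhigh_odd m t' ζ l1 l2 l3 (by omega), mul_zero] at hne
    exact hne rfl
  rw [← Finset.sum_filter_of_ne hkill]
  -- reindex
  have hre : ∑ t' ∈ (Finset.range (ζ + 1)).filter (fun t' => t' % 2 = 0),
      (ζ.choose t' * 2 ^ ζ) * (NhighSet m t' ζ l1 l2 l3).card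
      = ∑ j ∈ Finset.range (ζ / 2 + 1),
        (ζ.choose (2 * j) * 2 ^ ζ) * (NhighSet m (ζ - 2 * j) ζ l1 l2 l3).card := by
    apply Finset.sum_nbij' (fun t' => (ζ - t') / 2) (fun j => ζ - 2 * j)
    · intro t' ht'
      rw [Finset.mem_filter, Finset.mem_range] at ht'
      rw [Finset.mem_range]
      omega
    · intro j hj
      rw [Finset.mem_range] at hj
      rw [Finset.mem_filter, Finset.mem_range]
      omega
    · intro t' ht'
      rw [Finset.mem_filter, Finset.mem_range] at ht'
      omega
    · intro j hj
      rw [Finset.mem_range] at hj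
      omega
    · intro t' ht'
      rw [Finset.mem_filter, Finset.mem_range] at ht'
      have h2 : 2 * ((ζ - t') / 2) = ζ - t' := by omega
      rw [h2]
      have h3 : ζ - (ζ - t') = t' := by omega
      rw [h3]
      have h4 : ζ.choose (ζ - t') = ζ.choose t' := Nat.choose_symm (by omega)
      rw [h4]
  rw [hre]
  rw [Finset.mul_sum]
  apply Finset.sum_congr rfl
  intro j hj
  rw [Finset.mem_range] at hj
  rw [Nhigh_eval m ζ l1 l2 l3 j hζeven (by omega)]
  have harg : ((ζ + m : ℕ) : ℤ) = (n : ℤ) := by rw [hm]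
  rw [harg]
  ring

open scoped Classical

/-- The count of ordered triples `(A₁,A₂,A₃)` of mutually disjoint subsets of
`{1,…,2n}` with `|Aᵢ| = 2ℓᵢ` such that `(A₂∪A₃) △ S_ζ` and `(A₃∪A₁) △ S_ζ` are both
unions of pairs `{2j-1,2j}` equals
`2^ζ · Σ_{j=0}^{ζ/2} C(ζ,2j)·C(n-ζ; ℓ₁-ζ/2+j, ℓ₂-ζ/2+j, ℓ₃-j, n-ℓ₁-ℓ₂-ℓ₃-j)`. -/
theorem count_triples_symmDiff (n ζ ℓ₁ ℓ₂ ℓ₃ : ℕ) (hn : 1 ≤ n)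
    (hζeven : ζ % 2 = 0) (hζ : ζ ≤ n) (hsum : ℓ₁ + ℓ₂ + ℓ₃ ≤ n) :
    ((Finset.univ :
          Finset (Finset (Fin (2 * n)) × Finset (Fin (2 * n)) × Finset (Fin (2 * n)))).filter
        fun A =>
          Disjoint A.1 A.2.1 ∧ Disjoint A.1 A.2.2 ∧ Disjoint A.2.1 A.2.2 ∧
            A.1.card = 2 * ℓ₁ ∧ A.2.1.card = 2 * ℓ₂ ∧ A.2.2.card = 2 * ℓ₃ ∧
            IsPaired n (((A.2.1 ∪ A.2.2) \ oddSet n ζ) ∪ (oddSet n ζ \ (A.2.1 ∪ A.2.2))) ∧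
            IsPaired n (((A.2.2 ∪ A.1) \ oddSet n ζ) ∪ (oddSet n ζ \ (A.2.2 ∪ A.1)))).card
      = 2 ^ ζ * ∑ j ∈ Finset.range (ζ / 2 + 1),
          ζ.choose (2 * j) *
            mult4 ((ℓ₁ : ℤ) - ((ζ / 2 : ℕ) : ℤ) + (j : ℤ))
              ((ℓ₂ : ℤ) - ((ζ / 2 : ℕ) : ℤ) + (j : ℤ)) ((ℓ₃ : ℤ) - (j : ℤ))
              ((n : ℤ) - (ℓ₁ : ℤ) - (ℓ₂ : ℤ) - (ℓ₃ : ℤ) - (j : ℤ)) := by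
  rw [claim1 n ζ ℓ₁ ℓ₂ ℓ₃, claim2 n ζ ℓ₁ ℓ₂ ℓ₃ hζeven hζ]
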